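/- Let V be a C-representation of H(m,1,n) and let e ∈ V be a nonzero common eigenvector of the Jucys–Murphy elements, with J_i e = a_i e for i = 1,…,n. If a_{i+1} ≠ q² a_i and a_{i+1} ≠ q⁻² a_i, then the vector e' = σ_i e − ((q−q⁻¹) a_{i+1}/(a_{i+1}−a_i)) e is a nonzero common eigenvector of the Jucys–Murphy elements with eigenvalue string (a_1,…,a_{i+1},a_i,…,a_n), i.e. the string obtained from (a_1,…,a_n) by exchanging a_i and a_{i+1}. -/

import Mathlib

/-- Generators of the cyclotomic Hecke algebra `H(m,1,n)`:
`tau` and `sig i` (representing `σ_{i+1}`) for `i : Fin (n-1)`. -/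
inductive CycGen (n : ℕ) : Type
  | tau : CycGen n
  | sig : Fin (n - 1) → CycGen n

/-- The defining relations of the cyclotomic Hecke algebra `H(m,1,n)` with
parameters `q`, `qinv` (playing the role of `q⁻¹`) and `v : Fin m → R`. -/
inductive cycRel (R : Type) [CommRing R] (m n : ℕ) (q qinv : R) (v : Fin m → R) :
    FreeAlgebra R (CycGen n) → FreeAlgebra R (CycGen n) → Prop
  | braid (i j : Fin (n - 1)) (h : (j : ℕ) = (i : ℕ) + 1) :
      cycRel R m n q qinv v
        (FreeAlgebra.ι R (CycGen.sig i) * FreeAlgebra.ι R (CycGen.sig j) *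
          FreeAlgebra.ι R (CycGen.sig i))
        (FreeAlgebra.ι R (CycGen.sig j) * FreeAlgebra.ι R (CycGen.sig i) *
          FreeAlgebra.ι R (CycGen.sig j))
  | comm (i j : Fin (n - 1)) (h : (i : ℕ) + 1 < (j : ℕ)) :
      cycRel R m n q qinv v
        (FreeAlgebra.ι R (CycGen.sig i) * FreeAlgebra.ι R (CycGen.sig j))
        (FreeAlgebra.ι R (CycGen.sig j) * FreeAlgebra.ι R (CycGen.sig i))
  | tauSigma (i : Fin (n - 1)) (h : (i : ℕ) = 0) :
      cycRel R m n q qinv v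
        (FreeAlgebra.ι R CycGen.tau * FreeAlgebra.ι R (CycGen.sig i) *
          FreeAlgebra.ι R CycGen.tau * FreeAlgebra.ι R (CycGen.sig i))
        (FreeAlgebra.ι R (CycGen.sig i) * FreeAlgebra.ι R CycGen.tau *
          FreeAlgebra.ι R (CycGen.sig i) * FreeAlgebra.ι R CycGen.tau)
  | tauComm (i : Fin (n - 1)) (h : 0 < (i : ℕ)) :
      cycRel R m n q qinv v
        (FreeAlgebra.ι R CycGen.tau * FreeAlgebra.ι R (CycGen.sig i))
        (FreeAlgebra.ι R (CycGen.sig i) * FreeAlgebra.ι R CycGen.tau)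
  | quadratic (i : Fin (n - 1)) :
      cycRel R m n q qinv v
        (FreeAlgebra.ι R (CycGen.sig i) * FreeAlgebra.ι R (CycGen.sig i))
        ((q - qinv) • FreeAlgebra.ι R (CycGen.sig i) + 1)
  | cyclotomic :
      cycRel R m n q qinv v
        ((List.ofFn (fun k : Fin m =>
            FreeAlgebra.ι R CycGen.tau - algebraMap R (FreeAlgebra R (CycGen n)) (v k))).prod)
        0

/-- The cyclotomic Hecke algebra `H(m,1,n)`. -/
abbrev CycHecke (R : Type) [CommRing R] (m n : ℕ) (q qinv : R) (v : Fin m → R) : Type :=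
  RingQuot (cycRel R m n q qinv v)

variable (R : Type) [CommRing R] (m n : ℕ) (q qinv : R) (v : Fin m → R)

/-- The generator `τ` of `H(m,1,n)`. -/
noncomputable def tauH : CycHecke R m n q qinv v :=
  RingQuot.mkAlgHom R (cycRel R m n q qinv v) (FreeAlgebra.ι R CycGen.tau)

/-- The generator `σ_{i+1}` of `H(m,1,n)`, for `i : Fin (n-1)`. -/
noncomputable def sigH (i : Fin (n - 1)) : CycHecke R m n q qinv v :=
  RingQuot.mkAlgHom R (cycRel R m n q qinv v) (FreeAlgebra.ι R (CycGen.sig i))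

/-- The generator `σ_{k+1}` of `H(m,1,n)`, for `k : ℕ` (defined as `1` out of range). -/
noncomputable def sigN (k : ℕ) : CycHecke R m n q qinv v :=
  if h : k < n - 1 then sigH R m n q qinv v ⟨k, h⟩ else 1

/-- The inverse `σ_{k+1}⁻¹ = σ_{k+1} - (q - q⁻¹)` of the generator `σ_{k+1}`. -/
noncomputable def sigInvN (k : ℕ) : CycHecke R m n q qinv v :=
  sigN R m n q qinv v k - algebraMap R (CycHecke R m n q qinv v) (q - qinv)

/-- `leftW j = σ_j⁻¹ σ_{j-1}⁻¹ ⋯ σ_1⁻¹` (with `leftW 0 = 1`). -/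
noncomputable def leftW : ℕ → CycHecke R m n q qinv v
  | 0 => 1
  | j + 1 => sigInvN R m n q qinv v j * leftW j

/-- `rW k = σ_1 σ_2 ⋯ σ_k` (with `rW 0 = 1`). -/
noncomputable def rW : ℕ → CycHecke R m n q qinv v
  | 0 => 1
  | k + 1 => rW k * sigN R m n q qinv v k

/-- The Jucys–Murphy elements: `JM k` is the element `J_{k+1}` of the paper, so
`JM 0 = τ` and `JM (k+1) = σ_{k+1} (JM k) σ_{k+1}`. -/
noncomputable def JM : ℕ → CycHecke R m n q qinv v
  | 0 => tauH R m n q qinv v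
  | k + 1 => sigN R m n q qinv v k * JM k * sigN R m n q qinv v k

section AuxLemmas

lemma heckeConjComm {A : Type*} [Ring A] (s t J : A) (h1 : s * t = t * s)
    (h2 : s * J = J * s) : s * (t * J * t) = t * J * t * s := by
  simp only [← mul_assoc]
  rw [h1, mul_assoc t s J, h2, ← mul_assoc, mul_assoc (t * J) s t, h1, ← mul_assoc]

lemma sigN_eq (i : ℕ) (hi : i < n - 1) :
    sigN R m n q qinv v i
      = RingQuot.mkAlgHom R (cycRel R m n q qinv v) (FreeAlgebra.ι R (CycGen.sig ⟨i, hi⟩)) := by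
  unfold sigN; rw [dif_pos hi]; rfl

lemma sigN_one (i : ℕ) (hi : ¬ i < n - 1) : sigN R m n q qinv v i = 1 := by
  unfold sigN; rw [dif_neg hi]

lemma sigN_quad (i : ℕ) (hi : i < n - 1) :
    sigN R m n q qinv v i * sigN R m n q qinv v i
      = (q - qinv) • sigN R m n q qinv v i + 1 := by
  have h := RingQuot.mkAlgHom_rel R
    (cycRel.quadratic (R := R) (m := m) (n := n) (q := q) (qinv := qinv) (v := v) ⟨i, hi⟩)
  simp only [map_mul, map_add, map_smul, map_one] at h
  rw [sigN_eq R m n q qinv v i hi]; exact h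

lemma sigN_comm (i j : ℕ) (hij : i + 1 < j) :
    sigN R m n q qinv v i * sigN R m n q qinv v j
      = sigN R m n q qinv v j * sigN R m n q qinv v i := by
  by_cases hj : j < n - 1
  · have hi : i < n - 1 := by omega
    have h := RingQuot.mkAlgHom_rel R
      (cycRel.comm (R := R) (m := m) (n := n) (q := q) (qinv := qinv) (v := v) ⟨i, hi⟩ ⟨j, hj⟩ hij)
    simp only [map_mul] at h
    rw [sigN_eq R m n q qinv v i hi, sigN_eq R m n q qinv v j hj]; exact h
  · rw [sigN_one R m n q qinv v j hj, mul_one, one_mul]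

lemma sigN_braid (i : ℕ) (hb : i + 1 < n - 1) :
    sigN R m n q qinv v i * sigN R m n q qinv v (i + 1) * sigN R m n q qinv v i
      = sigN R m n q qinv v (i + 1) * sigN R m n q qinv v i * sigN R m n q qinv v (i + 1) := by
  have hi : i < n - 1 := by omega
  have h := RingQuot.mkAlgHom_rel R
    (cycRel.braid (R := R) (m := m) (n := n) (q := q) (qinv := qinv) (v := v) ⟨i, hi⟩ ⟨i + 1, hb⟩ rfl)
  simp only [map_mul] at h
  rw [sigN_eq R m n q qinv v i hi, sigN_eq R m n q qinv v (i + 1) hb]; exact h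

lemma tauH_sigN_comm (i : ℕ) (hpos : 0 < i) :
    tauH R m n q qinv v * sigN R m n q qinv v i
      = sigN R m n q qinv v i * tauH R m n q qinv v := by
  by_cases hi : i < n - 1
  · have h := RingQuot.mkAlgHom_rel R
      (cycRel.tauComm (R := R) (m := m) (n := n) (q := q) (qinv := qinv) (v := v) ⟨i, hi⟩ hpos)
    simp only [map_mul] at h
    rw [sigN_eq R m n q qinv v i hi]; exact h
  · rw [sigN_one R m n q qinv v i hi, mul_one, one_mul]

lemma sigN_JM_comm_lt (i k : ℕ) (hk : k < i) :
    sigN R m n q qinv v i * JM R m n q qinv v k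
      = JM R m n q qinv v k * sigN R m n q qinv v i := by
  induction k with
  | zero => exact (tauH_sigN_comm R m n q qinv v i hk).symm
  | succ k ih =>
    exact heckeConjComm _ _ _ ((sigN_comm R m n q qinv v k i (by omega)).symm)
      (ih (by omega))

lemma sigN_JM_comm_gt (i k : ℕ) (hik : i + 1 < k) (hkn : k ≤ n - 1) :
    sigN R m n q qinv v i * JM R m n q qinv v k
      = JM R m n q qinv v k * sigN R m n q qinv v i := by
  induction k with
  | zero => omega
  | succ k ih =>
    by_cases hbase : k = i + 1
    · subst hbase
      have hb : i + 1 < n - 1 := by omega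
      have hbr := sigN_braid R m n q qinv v i hb
      have hc := sigN_JM_comm_lt R m n q qinv v (i + 1) i (by omega)
      set s0 := sigN R m n q qinv v i with hs0
      set s1 := sigN R m n q qinv v (i + 1) with hs1
      set X := JM R m n q qinv v i with hX
      show s0 * (s1 * (s0 * X * s0) * s1) = s1 * (s0 * X * s0) * s1 * s0
      simp only [← mul_assoc]
      rw [hbr, mul_assoc (s1 * s0) s1 X, hc, ← mul_assoc,
        mul_assoc (s1 * s0 * X) s1 s0, mul_assoc (s1 * s0 * X) (s1 * s0) s1, ← hbr]
      simp only [← mul_assoc]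
    · exact heckeConjComm _ _ _ (sigN_comm R m n q qinv v i k (by omega))
        (ih (by omega) (by omega))

lemma sigN_mul_JM_succ (i : ℕ) (hi : i < n - 1) :
    sigN R m n q qinv v i * JM R m n q qinv v (i + 1)
      = (q - qinv) • JM R m n q qinv v (i + 1)
        + JM R m n q qinv v i * sigN R m n q qinv v i := by
  have hquad := sigN_quad R m n q qinv v i hi
  set s := sigN R m n q qinv v i with hs
  set J := JM R m n q qinv v i with hJ
  show s * (s * J * s) = (q - qinv) • (s * J * s) + J * s
  calc s * (s * J * s) = s * s * (J * s) := by simp only [mul_assoc]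
    _ = ((q - qinv) • s + 1) * (J * s) := by rw [hquad]
    _ = (q - qinv) • (s * (J * s)) + J * s := by
        rw [add_mul, one_mul, smul_mul_assoc]
    _ = (q - qinv) • (s * J * s) + J * s := by rw [mul_assoc]

lemma JM_succ_mul_sigN (i : ℕ) (hi : i < n - 1) :
    JM R m n q qinv v (i + 1) * sigN R m n q qinv v i
      = (q - qinv) • JM R m n q qinv v (i + 1)
        + sigN R m n q qinv v i * JM R m n q qinv v i := by
  have hquad := sigN_quad R m n q qinv v i hi
  set s := sigN R m n q qinv v i with hs
  set J := JM R m n q qinv v i with hJ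
  show s * J * s * s = (q - qinv) • (s * J * s) + s * J
  calc s * J * s * s = s * J * (s * s) := by rw [mul_assoc]
    _ = s * J * ((q - qinv) • s + 1) := by rw [hquad]
    _ = (q - qinv) • (s * J * s) + s * J := by
        rw [mul_add, mul_one, mul_smul_comm]

/-- For a diagonalizable operator, an eigenvector cannot be of the form
`f u - a • u` with eigenvalue `a`. -/
lemma diagSubLemma {V : Type} [AddCommGroup V] [Module ℂ V]
    (f : Module.End ℂ V) (hf : ⨆ μ : ℂ, f.eigenspace μ = ⊤)
    (a : ℂ) (w u : V) (hw : f w = a • w) (hu : f u - a • u = w) : w = 0 := by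
  have hmem : ∀ x : V, f x - a • x ∈ ⨆ μ, ⨆ _ : μ ≠ a, f.eigenspace μ := by
    intro x
    have hx : x ∈ ⨆ μ : ℂ, f.eigenspace μ := by rw [hf]; trivial
    refine Submodule.iSup_induction (motive := fun y => f y - a • y ∈
      ⨆ μ, ⨆ _ : μ ≠ a, f.eigenspace μ) (fun μ => f.eigenspace μ) hx ?_ ?_ ?_
    · intro μ y hy
      have hy' := Module.End.mem_eigenspace_iff.mp hy
      by_cases hμ : μ = a
      · subst hμ
        rw [hy', sub_self]
        exact Submodule.zero_mem _
      · refine Submodule.mem_iSup_of_mem μ (Submodule.mem_iSup_of_mem hμ ?_)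
        have hys : f y - a • y = (μ - a) • y := by rw [hy', sub_smul]
        rw [hys]
        exact Submodule.smul_mem _ _ hy
    · simp
    · intro x y hx' hy'
      have hxy : f (x + y) - a • (x + y) = (f x - a • x) + (f y - a • y) := by
        rw [map_add, smul_add]; abel
      rw [hxy]; exact Submodule.add_mem _ hx' hy'
  have h1 : w ∈ ⨆ μ, ⨆ _ : μ ≠ a, f.eigenspace μ := hu ▸ hmem u
  have h2 : w ∈ f.eigenspace a := Module.End.mem_eigenspace_iff.mpr hw
  exact Submodule.disjoint_def.mp (f.eigenspaces_iSupIndep a) w h2 h1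

end AuxLemmas

/-- The semisimplicity conditions (together with `q ≠ 0`, `v k ≠ 0`) on the
parameters: `1 + q² + ⋯ + q^{2N} ≠ 0` for `0 < N < n`, and `q^{2i} v_j ≠ v_k`
for `j ≠ k` and `-n < i < n`. -/
def SSParams (m n : ℕ) (q : ℂ) (v : Fin m → ℂ) : Prop :=
  (∀ N : ℕ, 0 < N → N < n → ∑ k ∈ Finset.range (N + 1), q ^ (2 * k) ≠ 0) ∧
  (∀ j k : Fin m, j ≠ k → ∀ i : ℤ, -(n : ℤ) < i → i < (n : ℤ) → q ^ (2 * i) * v j ≠ v k)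

/-- A subspace `W` is invariant under an endomorphism `f`. -/
def Invt {V : Type} [AddCommGroup V] [Module ℂ V] (f : Module.End ℂ V)
    (W : Submodule ℂ V) : Prop :=
  ∀ x ∈ W, f x ∈ W

/-- A `C`-representation of `H(m,1,n)`: the Jucys–Murphy elements `J_1,…,J_n`
act by diagonalizable operators, and for every `i = 1,…,n-1` the representation
space is completely reducible over the subalgebra generated by `J_i, J_{i+1}, σ_i`
(every invariant subspace has an invariant complement). -/
def IsCRep (m n : ℕ) (q : ℂ) (v : Fin m → ℂ) {V : Type} [AddCommGroup V] [Module ℂ V]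
    (ρ : CycHecke ℂ m n q q⁻¹ v →ₐ[ℂ] Module.End ℂ V) : Prop :=
  (∀ i < n, ⨆ μ : ℂ, (ρ (JM ℂ m n q q⁻¹ v i)).eigenspace μ = ⊤) ∧
  ∀ i : ℕ, i + 1 < n → ∀ W : Submodule ℂ V,
    Invt (ρ (JM ℂ m n q q⁻¹ v i)) W → Invt (ρ (JM ℂ m n q q⁻¹ v (i + 1))) W →
    Invt (ρ (sigN ℂ m n q q⁻¹ v i)) W →
    ∃ W' : Submodule ℂ V, IsCompl W W' ∧ Invt (ρ (JM ℂ m n q q⁻¹ v i)) W' ∧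
      Invt (ρ (JM ℂ m n q q⁻¹ v (i + 1))) W' ∧ Invt (ρ (sigN ℂ m n q q⁻¹ v i)) W'
/-- If `e` is a nonzero common eigenvector of the Jucys–Murphy
elements in a `C`-representation, with `J_i e = a_i e`, and `a_{i+1} ≠ q^{±2} a_i`,
then `e' = σ_i e - ((q-q⁻¹) a_{i+1}/(a_{i+1}-a_i)) e` is a nonzero common
eigenvector with eigenvalue string obtained by exchanging `a_i` and `a_{i+1}`. -/
theorem crep_intertwined_eigenvector (m n : ℕ) (hn : 2 ≤ n) (q : ℂ) (hq : q ≠ 0)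
    (v : Fin m → ℂ) (hv : ∀ k, v k ≠ 0) (hss : SSParams m n q v)
    (V : Type) [AddCommGroup V] [Module ℂ V] [FiniteDimensional ℂ V]
    (ρ : CycHecke ℂ m n q q⁻¹ v →ₐ[ℂ] Module.End ℂ V) (hC : IsCRep m n q v ρ)
    (e : V) (he : e ≠ 0) (a : Fin n → ℂ)
    (ha : ∀ i : Fin n, ρ (JM ℂ m n q q⁻¹ v (i : ℕ)) e = a i • e) :
    ∀ (i : ℕ) (h : i + 1 < n),
      a ⟨i + 1, h⟩ ≠ q ^ 2 * a ⟨i, by omega⟩ →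
      a ⟨i + 1, h⟩ ≠ q⁻¹ ^ 2 * a ⟨i, by omega⟩ →
      ∀ e' : V,
        e' = ρ (sigN ℂ m n q q⁻¹ v i) e -
              ((q - q⁻¹) * a ⟨i + 1, h⟩ / (a ⟨i + 1, h⟩ - a ⟨i, by omega⟩)) • e →
        e' ≠ 0 ∧
        ∀ k : Fin n, ρ (JM ℂ m n q q⁻¹ v (k : ℕ)) e' =
          (if (k : ℕ) = i then a ⟨i + 1, h⟩
            else if (k : ℕ) = i + 1 then a ⟨i, by omega⟩ else a k) • e' := by
  intro i h hne1 hne2 e' he'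
  have hii : i < n := by omega
  have hi : i < n - 1 := by omega
  have hq1 : q * q⁻¹ = 1 := mul_inv_cancel₀ hq
  have hae0 : ρ (JM ℂ m n q q⁻¹ v i) e = a ⟨i, hii⟩ • e := ha ⟨i, hii⟩
  have hae1 : ρ (JM ℂ m n q q⁻¹ v (i + 1)) e = a ⟨i + 1, h⟩ • e := ha ⟨i + 1, h⟩
  set ai := a ⟨i, hii⟩ with hai_def
  set ai1 := a ⟨i + 1, h⟩ with hai1_def
  have hne1' : ai1 ≠ q ^ 2 * ai := hne1
  have hne2' : ai1 ≠ q⁻¹ ^ 2 * ai := hne2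
  set u := ρ (sigN ℂ m n q q⁻¹ v i) e with hu
  have he2 : e' = u - ((q - q⁻¹) * ai1 / (ai1 - ai)) • e := he'
  -- quadratic relation applied to e
  have Cq : ρ (sigN ℂ m n q q⁻¹ v i) u = (q - q⁻¹) • u + e := by
    have h0 := congrArg (fun x => ρ x e) (sigN_quad ℂ m n q q⁻¹ v i hi)
    simp only [map_mul, map_add, map_smul, map_one, Module.End.mul_apply,
      LinearMap.add_apply, LinearMap.smul_apply, Module.End.one_apply] at h0
    exact h0
  -- J_i applied to u
  have C1 : ρ (JM ℂ m n q q⁻¹ v i) u = ai1 • u - ((q - q⁻¹) * ai1) • e := by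
    have halg : JM ℂ m n q q⁻¹ v i * sigN ℂ m n q q⁻¹ v i
        = sigN ℂ m n q q⁻¹ v i * JM ℂ m n q q⁻¹ v (i + 1)
          - (q - q⁻¹) • JM ℂ m n q q⁻¹ v (i + 1) := by
      rw [sigN_mul_JM_succ ℂ m n q q⁻¹ v i hi, add_sub_cancel_left]
    have h1 := congrArg (fun x => ρ x e) halg
    simp only [map_mul, map_sub, map_smul, Module.End.mul_apply, LinearMap.sub_apply,
      LinearMap.smul_apply] at h1
    rw [hae1, map_smul, smul_smul] at h1
    exact h1
  -- J_{i+1} applied to u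
  have C2 : ρ (JM ℂ m n q q⁻¹ v (i + 1)) u = ((q - q⁻¹) * ai1) • e + ai • u := by
    have h1 := congrArg (fun x => ρ x e) (JM_succ_mul_sigN ℂ m n q q⁻¹ v i hi)
    simp only [map_mul, map_add, map_smul, Module.End.mul_apply, LinearMap.add_apply,
      LinearMap.smul_apply] at h1
    rw [hae1, hae0, map_smul, smul_smul] at h1
    exact h1
  -- other J_k applied to u
  have C3 : ∀ k : Fin n, (k : ℕ) ≠ i → (k : ℕ) ≠ i + 1 →
      ρ (JM ℂ m n q q⁻¹ v (k : ℕ)) u = a k • u := by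
    intro k hk1 hk2
    have hkn := k.2
    have hcomm : sigN ℂ m n q q⁻¹ v i * JM ℂ m n q q⁻¹ v (k : ℕ)
        = JM ℂ m n q q⁻¹ v (k : ℕ) * sigN ℂ m n q q⁻¹ v i := by
      rcases lt_or_gt_of_ne hk1 with hlt | hgt
      · exact sigN_JM_comm_lt ℂ m n q q⁻¹ v i (k : ℕ) hlt
      · exact sigN_JM_comm_gt ℂ m n q q⁻¹ v i (k : ℕ) (by omega) (by omega)
    have h1 := congrArg (fun x => ρ x e) hcomm
    simp only [map_mul, Module.End.mul_apply] at h1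
    rw [ha k, map_smul] at h1
    exact h1.symm
  -- the two neighbouring eigenvalues differ
  have hd : ai1 - ai ≠ 0 := by
    intro hd0
    have heq : ai1 = ai := sub_eq_zero.mp hd0
    have ha0 : ai ≠ 0 := by
      intro h0
      exact hne1' (by rw [heq, h0, mul_zero])
    have hδ0 : q - q⁻¹ ≠ 0 := by
      intro h0
      have h5 : q = q⁻¹ := sub_eq_zero.mp h0
      have hq2 : q ^ 2 = 1 := by
        rw [pow_two]; nth_rewrite 2 [h5]; exact hq1
      exact hne1' (by rw [hq2, one_mul]; exact heq)
    have hfu : ρ (JM ℂ m n q q⁻¹ v i) u - ai • u = (-((q - q⁻¹) * ai)) • e := by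
      rw [C1, heq, neg_smul]; abel
    have hweig : ρ (JM ℂ m n q q⁻¹ v i) ((-((q - q⁻¹) * ai)) • e)
        = ai • ((-((q - q⁻¹) * ai)) • e) := by
      rw [map_smul, hae0, smul_smul, smul_smul, mul_comm]
    have hE := diagSubLemma (ρ (JM ℂ m n q q⁻¹ v i)) (hC.1 i hii) ai
      ((-((q - q⁻¹) * ai)) • e) u hweig hfu
    rcases smul_eq_zero.mp hE with h0 | h0
    · exact (neg_ne_zero.mpr (mul_ne_zero hδ0 ha0)) h0
    · exact he h0
  have hc : ((q - q⁻¹) * ai1 / (ai1 - ai)) * (ai1 - ai) = (q - q⁻¹) * ai1 :=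
    div_mul_cancel₀ _ hd
  -- e' is nonzero
  have hne0 : e' ≠ 0 := by
    intro h0
    have hse : u = ((q - q⁻¹) * ai1 / (ai1 - ai)) • e := by
      have h1 : u - ((q - q⁻¹) * ai1 / (ai1 - ai)) • e = 0 := by rw [← he2]; exact h0
      exact sub_eq_zero.mp h1
    set c := (q - q⁻¹) * ai1 / (ai1 - ai) with hcdef
    have h1 : (c * c) • e = ((q - q⁻¹) * c) • e + e := by
      have h2 := Cq
      rw [hse, map_smul, ← hu, hse, smul_smul, smul_smul] at h2
      exact h2
    have hcc : c * c = (q - q⁻¹) * c + 1 := by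
      have h2 : (c * c - ((q - q⁻¹) * c + 1)) • e = 0 := by
        rw [sub_smul, h1, add_smul, one_smul]; abel
      rcases smul_eq_zero.mp h2 with h3 | h3
      · exact sub_eq_zero.mp h3
      · exact absurd h3 he
    have hJ1 : ρ (JM ℂ m n q q⁻¹ v (i + 1)) e = (c * ai * c) • e := by
      have hdef : JM ℂ m n q q⁻¹ v (i + 1)
          = sigN ℂ m n q q⁻¹ v i * JM ℂ m n q q⁻¹ v i * sigN ℂ m n q q⁻¹ v i := rfl
      rw [hdef]
      simp only [map_mul, Module.End.mul_apply]
      rw [← hu, hse, map_smul, hae0, smul_smul, map_smul, ← hu, hse, smul_smul]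
    have hval : ai1 = c * ai * c := by
      have h2 : (ai1 - c * ai * c) • e = 0 := by
        rw [sub_smul, ← hae1, ← hJ1, sub_self]
      rcases smul_eq_zero.mp h2 with h3 | h3
      · exact sub_eq_zero.mp h3
      · exact absurd h3 he
    have hfac : (c - q) * (c + q⁻¹) = 0 := by linear_combination hcc - hq1
    rcases mul_eq_zero.mp hfac with h3 | h3
    · exact hne1' (by rw [hval, sub_eq_zero.mp h3]; ring)
    · have h4 : c = -q⁻¹ := eq_neg_of_add_eq_zero_left h3
      exact hne2' (by rw [hval, h4]; ring)
  refine ⟨hne0, ?_⟩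
  intro k
  by_cases hk1 : (k : ℕ) = i
  · rw [if_pos hk1, hk1]
    show ρ (JM ℂ m n q q⁻¹ v i) e' = ai1 • e'
    rw [he2, map_sub, map_smul, C1, hae0]
    match_scalars <;> field_simp [hd] <;> ring
  · by_cases hk2 : (k : ℕ) = i + 1
    · rw [if_neg hk1, if_pos hk2, hk2]
      show ρ (JM ℂ m n q q⁻¹ v (i + 1)) e' = ai • e'
      rw [he2, map_sub, map_smul, C2, hae1]
      match_scalars <;> field_simp [hd] <;> ring
    · rw [if_neg hk1, if_neg hk2]
      rw [he2, map_sub, map_smul, C3 k hk1 hk2, ha k]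
      match_scalars <;> ring
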